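/- arXiv:1504.00210 — 2 statements merged into one kernel-verified Lean document; each statement's English description precedes it below -/
import Mathlib

section
/- The affine map T taking triangle ABC to the cevian triangle DEF of P maps the complement of P back to P: T(K(P)) = P, where K(P) is the image of P under the homothety with center G and ratio -1/2. -/
open EuclideanGeometry Affine

local notation "Pt" => EuclideanSpace ℝ (Fin 2)

private theorem coll_param (X Y Z : Pt) (h : Collinear ℝ ({X, Y, Z} : Set Pt)) (hXY : X ≠ Y) :
    ∃ t : ℝ, Z = X + t • (Y - X) := by
  rw [collinear_iff_of_mem (Set.mem_insert X _)] at h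
  obtain ⟨v, hv⟩ := h
  obtain ⟨r₂, h₂⟩ := hv Y (by simp)
  obtain ⟨r₃, h₃⟩ := hv Z (by simp)
  have hr₂ : r₂ ≠ 0 := by rintro rfl; simp at h₂; exact hXY h₂.symm
  refine ⟨r₃ / r₂, ?_⟩
  rw [h₂, h₃]
  have : (r₃ / r₂) * r₂ = r₃ := div_mul_cancel₀ _ hr₂
  simp only [vadd_eq_add, add_sub_cancel_right, smul_smul, this]
  abel

private theorem range3 (A B C : Pt) : Set.range ![A, B, C] = {A, B, C} := by
  simp [Matrix.range_cons, Matrix.range_empty]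
  ext x; simp; tauto

private theorem indep_pair {A B C : Pt} (hABC : AffineIndependent ℝ ![A, B, C]) :
    ∀ s t : ℝ, s • (B - A) + t • (C - A) = 0 → s = 0 ∧ t = 0 := by
  have hnc : ¬ Collinear ℝ ({A, B, C} : Set Pt) := by
    rw [affineIndependent_iff_not_collinear, range3] at hABC
    exact hABC
  intro s t h
  by_contra hst
  rw [not_and_or] at hst
  apply hnc
  rw [collinear_iff_of_mem (Set.mem_insert A _)]
  rcases hst with hs | ht
  · refine ⟨C - A, fun p hp => ?_⟩
    simp only [Set.mem_insert_iff, Set.mem_singleton_iff] at hp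
    rcases hp with rfl | rfl | rfl
    · exact ⟨0, by simp⟩
    · refine ⟨-t/s, ?_⟩
      have : (s : ℝ) • (p - A) = (-t) • (C - A) := by
        rw [← sub_eq_zero] at h ⊢; rw [← h]; module
      have h3 := congrArg (fun z => (s⁻¹ : ℝ) • z) this
      simp only [smul_smul, inv_mul_cancel₀ hs, one_smul] at h3
      have h2 : p - A = (-t/s) • (C - A) := by
        rw [h3, div_eq_mul_inv, mul_comm]
      rw [vadd_eq_add, ← h2]; abel
    · exact ⟨1, by simp⟩
  · refine ⟨B - A, fun p hp => ?_⟩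
    simp only [Set.mem_insert_iff, Set.mem_singleton_iff] at hp
    rcases hp with rfl | rfl | rfl
    · exact ⟨0, by simp⟩
    · exact ⟨1, by simp⟩
    · refine ⟨-s/t, ?_⟩
      have : (t : ℝ) • (p - A) = (-s) • (B - A) := by
        rw [← sub_eq_zero] at h ⊢; rw [← h]; module
      have h3 := congrArg (fun z => (t⁻¹ : ℝ) • z) this
      simp only [smul_smul, inv_mul_cancel₀ ht, one_smul] at h3
      have h2 : p - A = (-s/t) • (B - A) := by
        rw [h3, div_eq_mul_inv, mul_comm]
      rw [vadd_eq_add, ← h2]; abel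

theorem stmt_12 (A B C G P D E F D0 E0 F0 : Pt) (T : Pt →ᵃ[ℝ] Pt)
(hABC : AffineIndependent ℝ ![A, B, C])
    (hG : G = (1/3 : ℝ) • (A + B + C))
    (hPa : ¬ Collinear ℝ {B, C, P})
    (hPb : ¬ Collinear ℝ {C, A, P})
    (hPc : ¬ Collinear ℝ {A, B, P})
    (hD : Collinear ℝ {B, C, D}) (hDcev : Collinear ℝ {A, P, D})
    (hE : Collinear ℝ {C, A, E}) (hEcev : Collinear ℝ {B, P, E})
    (hF : Collinear ℝ {A, B, F}) (hFcev : Collinear ℝ {C, P, F})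
    (hD0 : D0 = midpoint ℝ B C) (hE0 : E0 = midpoint ℝ C A) (hF0 : F0 = midpoint ℝ A B)
    (hTA : T A = D) (hTB : T B = E) (hTC : T C = F) :
    T (AffineMap.homothety G (-1/2 : ℝ) P) = P := by
  have hkey := indep_pair hABC
  -- distinctness of vertices
  have hAB : A ≠ B := fun h => (by decide : (0:Fin 3) ≠ 1) (hABC.injective (by simpa using h))
  have hBC : B ≠ C := fun h => (by decide : (1:Fin 3) ≠ 2) (hABC.injective (by simpa using h))
  have hCA : C ≠ A := fun h => (by decide : (2:Fin 3) ≠ 0) (hABC.injective (by simpa using h))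
  -- P distinct from vertices
  have hAP : A ≠ P := by
    rintro rfl
    exact hPc ((collinear_pair ℝ A B).subset (by intro x hx; simp at hx ⊢; tauto))
  have hBP : B ≠ P := by
    rintro rfl
    exact hPa ((collinear_pair ℝ B C).subset (by intro x hx; simp at hx ⊢; tauto))
  have hCP : C ≠ P := by
    rintro rfl
    exact hPa ((collinear_pair ℝ B C).subset (by intro x hx; simp at hx ⊢; tauto))
  -- barycentric coordinates of P
  have hLI : LinearIndependent ℝ ![B - A, C - A] := LinearIndependent.pair_iff.mpr hkey
  obtain ⟨β, γ, hP⟩ : ∃ β γ : ℝ, P = A + β • (B - A) + γ • (C - A) := by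
    have hcard : Fintype.card (Fin 2) = Module.finrank ℝ Pt := by
      simp [finrank_euclideanSpace_fin]
    set b := basisOfLinearIndependentOfCardEqFinrank hLI hcard with hb
    have hrepr := b.sum_repr (P - A)
    rw [Fin.sum_univ_two] at hrepr
    have hb0 : b 0 = B - A := by rw [hb, coe_basisOfLinearIndependentOfCardEqFinrank]; rfl
    have hb1 : b 1 = C - A := by rw [hb, coe_basisOfLinearIndependentOfCardEqFinrank]; rfl
    refine ⟨b.repr (P - A) 0, b.repr (P - A) 1, ?_⟩
    rw [hb0, hb1] at hrepr
    rw [add_assoc, hrepr]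
    abel
  -- parametrize the cevian points
  obtain ⟨t, hd1⟩ := coll_param B C D hD hBC
  obtain ⟨s, hd2⟩ := coll_param A P D hDcev hAP
  obtain ⟨u, he1⟩ := coll_param C A E hE hCA
  obtain ⟨v, he2⟩ := coll_param B P E hEcev hBP
  obtain ⟨w, hf1⟩ := coll_param A B F hF hAB
  obtain ⟨x, hf2⟩ := coll_param C P F hFcev hCP
  -- scalar equations
  have key1 : (s*β - 1 + t) • (B - A) + (s*γ - t) • (C - A) = 0 := by
    have h := hd2.symm.trans hd1
    rw [hP] at h
    linear_combination (norm := module) h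
  obtain ⟨e1, e2⟩ := hkey _ _ key1
  have hs' : s * (β + γ) = 1 := by linear_combination e1 + e2
  have key2 : (1 + v*β - v) • (B - A) + (v*γ - 1 + u) • (C - A) = 0 := by
    have h := he1.symm.trans he2
    rw [hP] at h
    linear_combination (norm := module) -h
  obtain ⟨e3, e4⟩ := hkey _ _ key2
  have hv' : v * (1 - β) = 1 := by linear_combination -e3
  have key3 : (w - x*β) • (B - A) + (x - x*γ - 1) • (C - A) = 0 := by
    have h := hf1.symm.trans hf2
    rw [hP] at h
    linear_combination (norm := module) h
  obtain ⟨e5, e6⟩ := hkey _ _ key3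
  have hx' : x * (1 - γ) = 1 := by linear_combination e6
  -- product-form equations
  have eq1 : (β + γ) • (D - A) = P - A := by
    rw [hd2, add_sub_cancel_left, smul_smul, mul_comm, hs', one_smul]
  have eq2 : (1 - β) • (E - B) = P - B := by
    rw [he2, add_sub_cancel_left, smul_smul, mul_comm, hv', one_smul]
  have eq3 : (1 - γ) • (F - C) = P - C := by
    rw [hf2, add_sub_cancel_left, smul_smul, mul_comm, hx', one_smul]
  -- the complement point
  have hq : AffineMap.homothety G (-1/2 : ℝ) P
      = (((1-β)/2) • (B - A) + ((1-γ)/2) • (C - A)) +ᵥ A := by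
    rw [AffineMap.homothety_apply, hG]
    simp only [vsub_eq_sub, vadd_eq_add]
    rw [hP]
    module
  rw [hq, AffineMap.map_vadd, hTA]
  have hlB : T.linear (B - A) = E - D := by
    have h := T.linearMap_vsub B A
    simp only [vsub_eq_sub, hTA, hTB] at h
    exact h
  have hlC : T.linear (C - A) = F - D := by
    have h := T.linearMap_vsub C A
    simp only [vsub_eq_sub, hTA, hTC] at h
    exact h
  rw [map_add, map_smul, map_smul, hlB, hlC, vadd_eq_add]
  linear_combination (norm := module) ((1:ℝ)/2) • eq1 + ((1:ℝ)/2) • eq2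
    + ((1:ℝ)/2) • eq3 + ((1:ℝ)/2) • hP
end

section
/- Assume D, E, F are affinely independent. Let A' be a point with A' ∉ {B, C} such that line BA' ∥ line DF and line CA' ∥ line DE; let B' be a point with B' ∉ {A, C} such that line AB' ∥ line EF and line CB' ∥ line DE; let C' be a point with C' ∉ {A, B} such that line AC' ∥ line EF and line BC' ∥ line DF. Then T'(A') = A, T'(B') = B, T'(C') = C; that is, the anticevian triangle A'B'C' of Q with respect to ABC equals T'⁻¹(ABC). -/
open EuclideanGeometry Affine
local notation "Pt" => EuclideanSpace ℝ (Fin 2)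

lemma set_rot (a b c : Pt) : ({a, b, c} : Set Pt) = {b, c, a} := by
  ext x; simp only [Set.mem_insert_iff, Set.mem_singleton_iff]; tauto

lemma set_swap23 (a b c : Pt) : ({a, b, c} : Set Pt) = {a, c, b} := by
  ext x; simp only [Set.mem_insert_iff, Set.mem_singleton_iff]; tauto

lemma set_swap12 (a b c : Pt) : ({a, b, c} : Set Pt) = {b, a, c} := by
  ext x; simp only [Set.mem_insert_iff, Set.mem_singleton_iff]; tauto

lemma collinear_param {X Y Z : Pt} (h : Collinear ℝ {X, Y, Z}) (hXY : X ≠ Y) :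
    ∃ t : ℝ, Z -ᵥ X = t • (Y -ᵥ X) := by
  rw [collinear_iff_of_mem (Set.mem_insert X {Y, Z})] at h
  obtain ⟨v, hv⟩ := h
  obtain ⟨rY, hY⟩ := hv Y (by simp)
  obtain ⟨rZ, hZ⟩ := hv Z (by simp)
  have hrY : rY ≠ 0 := by
    rintro rfl; apply hXY; simp at hY; simp [hY]
  refine ⟨rZ / rY, ?_⟩
  rw [hY, hZ]
  simp only [vadd_vsub]
  rw [smul_smul, div_mul_cancel₀ _ hrY]

lemma collinear_of_param {X Y Z : Pt} (t : ℝ) (h : Z -ᵥ X = t • (Y -ᵥ X)) :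
    Collinear ℝ {X, Y, Z} := by
  rw [collinear_iff_of_mem (Set.mem_insert X {Y, Z})]
  refine ⟨Y -ᵥ X, fun p hp => ?_⟩
  simp only [Set.mem_insert_iff, Set.mem_singleton_iff] at hp
  rcases hp with rfl | rfl | rfl
  · exact ⟨0, by simp⟩
  · exact ⟨1, by simp⟩
  · exact ⟨t, by rw [← h]; simp⟩

lemma indep2 {X Y Z : Pt} (h : ¬ Collinear ℝ {X, Y, Z}) {a b : ℝ}
    (hab : a • (Y -ᵥ X) + b • (Z -ᵥ X) = 0) : a = 0 ∧ b = 0 := by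
  by_cases hb : b = 0
  · subst hb
    by_cases ha : a = 0
    · exact ⟨ha, rfl⟩
    · exfalso
      apply h
      have hyx : Y -ᵥ X = 0 := by
        have h2 := hab
        simp only [zero_smul, add_zero] at h2
        exact (smul_eq_zero.mp h2).resolve_left ha
      have hYX : Y = X := by rwa [vsub_eq_zero_iff_eq] at hyx
      subst hYX
      have hset : ({Y, Y, Z} : Set Pt) = {Y, Z} := by
        ext x; simp only [Set.mem_insert_iff, Set.mem_singleton_iff]; tauto
      rw [hset]
      exact collinear_pair ℝ Y Z
  · exfalso
    apply h
    apply collinear_of_param (-a / b)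
    have h2 : b • (Z -ᵥ X) = (-a) • (Y -ᵥ X) := by
      linear_combination (norm := module) hab
    calc Z -ᵥ X = (b⁻¹ * b) • (Z -ᵥ X) := by rw [inv_mul_cancel₀ hb, one_smul]
      _ = b⁻¹ • (b • (Z -ᵥ X)) := by rw [mul_smul]
      _ = b⁻¹ • ((-a) • (Y -ᵥ X)) := by rw [h2]
      _ = (-a / b) • (Y -ᵥ X) := by
          rw [smul_smul, show b⁻¹ * -a = -a / b by ring]

lemma ncol_ne12 {X Y Z : Pt} (h : ¬ Collinear ℝ {X, Y, Z}) : X ≠ Y := by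
  rintro rfl
  apply h
  have hset : ({X, X, Z} : Set Pt) = {X, Z} := by
    ext x; simp only [Set.mem_insert_iff, Set.mem_singleton_iff]; tauto
  rw [hset]; exact collinear_pair ℝ X Z

lemma ncol_ne13 {X Y Z : Pt} (h : ¬ Collinear ℝ {X, Y, Z}) : X ≠ Z := by
  rintro rfl
  apply h
  have hset : ({X, Y, X} : Set Pt) = {X, Y} := by
    ext x; simp only [Set.mem_insert_iff, Set.mem_singleton_iff]; tauto
  rw [hset]; exact collinear_pair ℝ X Y

lemma ncol_ne23 {X Y Z : Pt} (h : ¬ Collinear ℝ {X, Y, Z}) : Y ≠ Z := by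
  rintro rfl
  apply h
  have hset : ({X, Y, Y} : Set Pt) = {X, Y} := by
    ext x; simp only [Set.mem_insert_iff, Set.mem_singleton_iff]; tauto
  rw [hset]; exact collinear_pair ℝ X Y

lemma para_param {X Y U V : Pt} (h : line[ℝ, X, Y] ∥ line[ℝ, U, V]) :
    ∃ t : ℝ, Y -ᵥ X = t • (V -ᵥ U) := by
  have hd := h.direction_eq
  rw [direction_affineSpan, direction_affineSpan, vectorSpan_pair, vectorSpan_pair] at hd
  have hmem : Y -ᵥ X ∈ Submodule.span ℝ {X -ᵥ Y} := by
    rw [show Y -ᵥ X = (-1 : ℝ) • (X -ᵥ Y) by rw [neg_one_smul, neg_vsub_eq_vsub_rev]]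
    exact Submodule.smul_mem _ _ (Submodule.mem_span_singleton_self _)
  rw [hd] at hmem
  obtain ⟨c, hc⟩ := Submodule.mem_span_singleton.mp hmem
  exact ⟨-c, by rw [← hc, neg_smul, ← smul_neg, neg_vsub_eq_vsub_rev]⟩

lemma key_lemma (A B C P D E F A1 : Pt) (T' : Pt →ᵃ[ℝ] Pt)
    (hABC : ¬ Collinear ℝ {A, B, C})
    (hPa : ¬ Collinear ℝ {B, C, P}) (hPb : ¬ Collinear ℝ {C, A, P})
    (hPc : ¬ Collinear ℝ {A, B, P})
    (hD : Collinear ℝ {B, C, D}) (hDcev : Collinear ℝ {A, P, D})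
    (hE : Collinear ℝ {C, A, E}) (hEcev : Collinear ℝ {B, P, E})
    (hF : Collinear ℝ {A, B, F}) (hFcev : Collinear ℝ {C, P, F})
    (hDEF : ¬ Collinear ℝ {D, E, F})
    (hBA1 : ∃ l : ℝ, A1 -ᵥ B = l • (F -ᵥ D))
    (hCA1 : ∃ m : ℝ, A1 -ᵥ C = m • (E -ᵥ D))
    (hTA : T' A = Equiv.pointReflection (midpoint ℝ B C) D)
    (hTB : T' B = Equiv.pointReflection (midpoint ℝ C A) E)
    (hTC : T' C = Equiv.pointReflection (midpoint ℝ A B) F) :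
    T' A1 = A := by
  have hAB : A ≠ B := ncol_ne12 hPc
  have hBC : B ≠ C := ncol_ne12 hPa
  have hCA : C ≠ A := ncol_ne12 hPb
  have hAP : A ≠ P := ncol_ne13 hPc
  have hBP : B ≠ P := ncol_ne23 hPc
  have hCP : C ≠ P := ncol_ne13 hPb
  -- D on BC
  obtain ⟨td, htd⟩ := collinear_param hD hBC
  simp only [vsub_eq_sub] at htd
  -- A ≠ D
  have hAD : A ≠ D := by
    intro h
    apply hABC
    rw [set_rot]
    apply collinear_of_param (X := B) (Y := C) (Z := A) td
    simp only [vsub_eq_sub]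
    rw [h]; exact htd
  -- P on line AD
  have hADP : Collinear ℝ {A, D, P} := by rw [set_swap23]; exact hDcev
  obtain ⟨p, hp⟩ := collinear_param hADP hAD
  simp only [vsub_eq_sub] at hp
  have hp0 : p ≠ 0 := by
    intro h
    rw [h, zero_smul, sub_eq_zero] at hp
    exact hAP hp.symm
  set x := p * (1 - td) with hxdef
  set y := p * td with hydef
  have hPxy : P - A = x • (B - A) + y • (C - A) := by
    rw [hxdef, hydef]
    linear_combination (norm := module) hp + p • htd
  have hsum : x + y = p := by rw [hxdef, hydef]; ring
  have hs0 : x + y ≠ 0 := by rw [hsum]; exact hp0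
  have hD' : (x + y) • (D - A) = x • (B - A) + y • (C - A) := by
    rw [hsum, ← hp]; exact hPxy
  have hx0 : x ≠ 0 := by
    intro h
    apply hPb
    rw [show ({C, A, P} : Set Pt) = {A, C, P} from set_swap12 C A P]
    apply collinear_of_param (X := A) (Y := C) (Z := P) y
    simp only [vsub_eq_sub]
    rw [h, zero_smul, zero_add] at hPxy
    exact hPxy
  have hy0 : y ≠ 0 := by
    intro h
    apply hPc
    apply collinear_of_param (X := A) (Y := B) (Z := P) x
    simp only [vsub_eq_sub]
    rw [h, zero_smul, add_zero] at hPxy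
    exact hPxy
  have hxy1 : x + y ≠ 1 := by
    intro h
    apply hPa
    apply collinear_of_param (X := B) (Y := C) (Z := P) (1 - x)
    simp only [vsub_eq_sub]
    have hy' : y = 1 - x := by linarith
    rw [hy'] at hPxy
    linear_combination (norm := module) hPxy
  -- E on CA
  have hACE : Collinear ℝ {A, C, E} := by
    rw [show ({A, C, E} : Set Pt) = {C, A, E} from set_swap12 A C E]; exact hE
  obtain ⟨ey, hEy⟩ := collinear_param hACE hCA.symm
  simp only [vsub_eq_sub] at hEy
  obtain ⟨qe, hQe⟩ := collinear_param hEcev hBP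
  simp only [vsub_eq_sub] at hQe
  have hcombE : (-1 - qe * (x - 1)) • (B - A) + (ey - qe * y) • (C - A) = 0 := by
    linear_combination (norm := module) hQe - hEy + qe • hPxy
  obtain ⟨hq1, hq2⟩ := indep2 (X := A) (Y := B) (Z := C) hABC
    (by simpa only [vsub_eq_sub] using hcombE)
  have hx1 : (1 : ℝ) - x ≠ 0 := by
    intro h
    apply (by norm_num : (-1 : ℝ) ≠ 0)
    linear_combination hq1 - qe * h
  have hey : ey * (1 - x) = y := by linear_combination y * hq1 + (1 - x) * hq2
  -- F on AB
  obtain ⟨fx, hFx⟩ := collinear_param hF hAB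
  simp only [vsub_eq_sub] at hFx
  obtain ⟨rf, hRf⟩ := collinear_param hFcev hCP
  simp only [vsub_eq_sub] at hRf
  have hcombF : (rf * x - fx) • (B - A) + (1 - rf + rf * y) • (C - A) = 0 := by
    linear_combination (norm := module) hFx - hRf - rf • hPxy
  obtain ⟨hr1, hr2⟩ := indep2 (X := A) (Y := B) (Z := C) hABC
    (by simpa only [vsub_eq_sub] using hcombF)
  have hy1 : (1 : ℝ) - y ≠ 0 := by
    intro h
    apply (by norm_num : (1 : ℝ) ≠ 0)
    linear_combination hr2 + rf * h
  have hfx : fx * (1 - y) = x := by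
    linear_combination (-(1 - y)) * hr1 + (-x) * hr2
  have hey' : ey = y / (1 - x) := by rw [eq_div_iff hx1]; exact hey
  have hfx' : fx = x / (1 - y) := by rw [eq_div_iff hy1]; exact hfx
  -- T' values
  have hTAeq : T' A = B + C - D := by
    rw [hTA, Equiv.pointReflection_apply, vsub_eq_sub, vadd_eq_add]
    linear_combination (norm := module) midpoint_add_self ℝ B C
  have hTBeq : T' B = C + A - E := by
    rw [hTB, Equiv.pointReflection_apply, vsub_eq_sub, vadd_eq_add]
    linear_combination (norm := module) midpoint_add_self ℝ C A
  have hTCeq : T' C = A + B - F := by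
    rw [hTC, Equiv.pointReflection_apply, vsub_eq_sub, vadd_eq_add]
    linear_combination (norm := module) midpoint_add_self ℝ A B
  have hD3c : (x + y) • (T' A - A) = y • (B - A) + x • (C - A) := by
    rw [hTAeq]
    linear_combination (norm := module) - hD'
  have hE3c : T' B - A = (1 - ey) • (C - A) := by
    rw [hTBeq]
    linear_combination (norm := module) - hEy
  have hF3c : T' C - A = (1 - fx) • (B - A) := by
    rw [hTCeq]
    linear_combination (norm := module) - hFx
  -- coordinates of E - D and F - D
  have hEDc : (x + y) • (E - D) = (-x) • (B - A) + ((x + y) * ey - y) • (C - A) := by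
    linear_combination (norm := module) (x + y) • hEy - hD'
  have hFDc : (x + y) • (F - D) = ((x + y) * fx - x) • (B - A) + (-y) • (C - A) := by
    linear_combination (norm := module) (x + y) • hFx - hD'
  -- the point A1
  obtain ⟨l, hl⟩ := hBA1
  obtain ⟨m, hm⟩ := hCA1
  simp only [vsub_eq_sub] at hl hm
  have hCB : C - B = l • (F - D) - m • (E - D) := by
    linear_combination (norm := module) hl - hm
  have k1 : (-(1 - y) * (x + y)) * ((x + y) * fx - x) + (-(1 - x) * (x + y)) * x
      = -(2 * x * y * (x + y)) := by
    rw [hfx']; field_simp; ring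
  have k2 : (-(1 - y) * (x + y)) * (-y) - (-(1 - x) * (x + y)) * ((x + y) * ey - y)
      = 2 * x * y * (x + y) := by
    rw [hey']; field_simp; ring
  have r1 : (-(1 - y) * (x + y)) • ((x + y) • (F - D)) - (-(1 - x) * (x + y)) • ((x + y) • (E - D))
      = ((-(1 - y) * (x + y)) * ((x + y) * fx - x) + (-(1 - x) * (x + y)) * x) • (B - A)
        + ((-(1 - y) * (x + y)) * (-y) - (-(1 - x) * (x + y)) * ((x + y) * ey - y)) • (C - A) := by
    linear_combination (norm := module) (-(1 - y) * (x + y)) • hFDc - (-(1 - x) * (x + y)) • hEDc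
  rw [k1, k2] at r1
  have hCB0 : (2 * x * y * (x + y)) • (C - B)
      = (-(1 - y) * (x + y)) • ((x + y) • (F - D)) - (-(1 - x) * (x + y)) • ((x + y) • (E - D)) := by
    rw [r1]; module
  have hzero : ((x + y) * ((-(1 - x) * (x + y)) - 2 * x * y * m)) • (E - D)
      + ((x + y) * (2 * x * y * l - (-(1 - y) * (x + y)))) • (F - D) = 0 := by
    linear_combination (norm := module) hCB0 - (2 * x * y * (x + y)) • hCB
  obtain ⟨hz1, hz2⟩ := indep2 (X := D) (Y := E) (Z := F) hDEF
    (by simpa only [vsub_eq_sub] using hzero)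
  have h2xyl : 2 * x * y * l = -(1 - y) * (x + y) := by
    rcases mul_eq_zero.mp hz2 with h | h
    · exact absurd h hs0
    · linarith
  -- T'.linear computations
  have hlin1 : T'.linear (B - A) = T' B - T' A := by
    have h0 := AffineMap.linearMap_vsub T' B A
    simpa only [vsub_eq_sub] using h0
  have hlin2 : T'.linear (C - A) = T' C - T' A := by
    have h0 := AffineMap.linearMap_vsub T' C A
    simpa only [vsub_eq_sub] using h0
  have hLFD : (x + y) • T'.linear (F - D)
      = ((x + y) * fx - x) • (T' B - T' A) + (-y) • (T' C - T' A) := by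
    have h0 : T'.linear ((x + y) • (F - D))
        = T'.linear (((x + y) * fx - x) • (B - A) + (-y) • (C - A)) := by rw [hFDc]
    simpa only [map_add, map_smul, hlin1, hlin2] using h0
  have hE3c' : (x + y) • (T' B - T' A) = (-y) • (B - A) + ((x + y) * (1 - ey) - x) • (C - A) := by
    linear_combination (norm := module) (x + y) • hE3c - hD3c
  have hF3c' : (x + y) • (T' C - T' A) = ((x + y) * (1 - fx) - y) • (B - A) + (-x) • (C - A) := by
    linear_combination (norm := module) (x + y) • hF3c - hD3c
  have hLFD3 : ((x + y) * (x + y)) • T'.linear (F - D)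
      = (((x + y) * fx - x) * (-y) + (-y) * ((x + y) * (1 - fx) - y)) • (B - A)
        + (((x + y) * fx - x) * ((x + y) * (1 - ey) - x) + (-y) * (-x)) • (C - A) := by
    linear_combination (norm := module) (x + y) • hLFD + ((x + y) * fx - x) • hE3c' + (-y) • hF3c'
  have hTL : (2 * x * y) • (T' A1 - T' B) = (-(1 - y) * (x + y)) • T'.linear (F - D) := by
    have h1 : T' A1 - T' B = l • T'.linear (F - D) := by
      have h0 := AffineMap.linearMap_vsub T' A1 B
      simp only [vsub_eq_sub] at h0
      rw [← h0, hl, map_smul]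
    rw [h1, smul_smul, h2xyl]
  have hK1 : (-(1 - y) * (x + y)) * (((x + y) * fx - x) * (-y) + (-y) * ((x + y) * (1 - fx) - y))
      = 0 := by ring
  have hK2 : (-(1 - y) * (x + y)) * (((x + y) * fx - x) * ((x + y) * (1 - ey) - x) + (-y) * (-x))
      + 2 * x * y * (x + y) * (x + y) * (1 - ey) = 0 := by
    rw [hey', hfx']; field_simp; ring
  have hfinal : (2 * x * y * (x + y) * (x + y)) • (T' A1 - A)
      = ((-(1 - y) * (x + y)) * (((x + y) * fx - x) * (-y) + (-y) * ((x + y) * (1 - fx) - y))) • (B - A)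
        + ((-(1 - y) * (x + y)) * (((x + y) * fx - x) * ((x + y) * (1 - ey) - x) + (-y) * (-x))
            + 2 * x * y * (x + y) * (x + y) * (1 - ey)) • (C - A) := by
    linear_combination (norm := module) ((x + y) * (x + y)) • hTL
      + (-(1 - y) * (x + y)) • hLFD3 + (2 * x * y * (x + y) * (x + y)) • hE3c
  rw [hK1, hK2] at hfinal
  simp only [zero_smul, add_zero] at hfinal
  have hc : (2 * x * y * (x + y) * (x + y)) ≠ 0 :=
    mul_ne_zero (mul_ne_zero (mul_ne_zero (mul_ne_zero two_ne_zero hx0) hy0) hs0) hs0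
  have h0 : T' A1 - A = 0 := by
    rcases smul_eq_zero.mp hfinal with h | h
    · exact absurd h hc
    · exact h
  exact sub_eq_zero.mp h0
theorem stmt_15 (A B C G P D E F D0 E0 F0 D3 E3 F3 P' Q A' B' C' : Pt) (T' : Pt →ᵃ[ℝ] Pt)
(hABC : AffineIndependent ℝ ![A, B, C])
    (hG : G = (1/3 : ℝ) • (A + B + C))
    (hPa : ¬ Collinear ℝ {B, C, P})
    (hPb : ¬ Collinear ℝ {C, A, P})
    (hPc : ¬ Collinear ℝ {A, B, P})
    (hD : Collinear ℝ {B, C, D}) (hDcev : Collinear ℝ {A, P, D})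
    (hE : Collinear ℝ {C, A, E}) (hEcev : Collinear ℝ {B, P, E})
    (hF : Collinear ℝ {A, B, F}) (hFcev : Collinear ℝ {C, P, F})
    (hD0 : D0 = midpoint ℝ B C) (hE0 : E0 = midpoint ℝ C A) (hF0 : F0 = midpoint ℝ A B)
(hD3 : D3 = Equiv.pointReflection D0 D)
    (hE3 : E3 = Equiv.pointReflection E0 E)
    (hF3 : F3 = Equiv.pointReflection F0 F)
(hP'a : Collinear ℝ {A, D3, P'})
    (hP'b : Collinear ℝ {B, E3, P'})
    (hP'c : Collinear ℝ {C, F3, P'})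
    (hQ : Q = AffineMap.homothety G (-1/2 : ℝ) P')
    (hDEF : AffineIndependent ℝ ![D, E, F])
    (hA'B : A' ≠ B) (hA'C : A' ≠ C)
    (hBA' : line[ℝ, B, A'] ∥ line[ℝ, D, F])
    (hCA' : line[ℝ, C, A'] ∥ line[ℝ, D, E])
    (hB'A : B' ≠ A) (hB'C : B' ≠ C)
    (hAB' : line[ℝ, A, B'] ∥ line[ℝ, E, F])
    (hCB' : line[ℝ, C, B'] ∥ line[ℝ, D, E])
    (hC'A : C' ≠ A) (hC'B : C' ≠ B)
    (hAC' : line[ℝ, A, C'] ∥ line[ℝ, E, F])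
    (hBC' : line[ℝ, B, C'] ∥ line[ℝ, D, F])
    (hT'A : T' A = D3) (hT'B : T' B = E3) (hT'C : T' C = F3) :
    T' A' = A ∧ T' B' = B ∧ T' C' = C := by
  have hABCn : ¬ Collinear ℝ {A, B, C} := affineIndependent_iff_not_collinear_set.mp hABC
  have hDEFn : ¬ Collinear ℝ {D, E, F} := affineIndependent_iff_not_collinear_set.mp hDEF
  have hTAr : T' A = Equiv.pointReflection (midpoint ℝ B C) D := by rw [hT'A, hD3, hD0]
  have hTBr : T' B = Equiv.pointReflection (midpoint ℝ C A) E := by rw [hT'B, hE3, hE0]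
  have hTCr : T' C = Equiv.pointReflection (midpoint ℝ A B) F := by rw [hT'C, hF3, hF0]
  refine ⟨?_, ?_, ?_⟩
  · exact key_lemma A B C P D E F A' T' hABCn hPa hPb hPc hD hDcev hE hEcev hF hFcev hDEFn
      (para_param hBA') (para_param hCA') hTAr hTBr hTCr
  · refine key_lemma B C A P E F D B' T' ?_ hPb hPc hPa hE hEcev hF hFcev hD hDcev ?_ ?_
      (para_param hAB') hTBr hTCr hTAr
    · rw [← set_rot]; exact hABCn
    · rw [← set_rot]; exact hDEFn
    · obtain ⟨t, ht⟩ := para_param hCB'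
      exact ⟨-t, by rw [ht, neg_smul, ← smul_neg, neg_vsub_eq_vsub_rev]⟩
  · refine key_lemma C A B P F D E C' T' ?_ hPc hPa hPb hF hFcev hD hDcev hE hEcev ?_ ?_ ?_
      hTCr hTAr hTBr
    · rw [← set_rot, ← set_rot]; exact hABCn
    · rw [← set_rot, ← set_rot]; exact hDEFn
    · obtain ⟨t, ht⟩ := para_param hAC'
      exact ⟨-t, by rw [ht, neg_smul, ← smul_neg, neg_vsub_eq_vsub_rev]⟩
    · obtain ⟨t, ht⟩ := para_param hBC'
      exact ⟨-t, by rw [ht, neg_smul, ← smul_neg, neg_vsub_eq_vsub_rev]⟩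
end
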